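/- Regular hunting of preys destabilizes the Lotka–Volterra system: for any b_x with −1 < b_x < 0 and b_y = 0, the point (X*, Y*) = (1, 1 + b_x) is a stationary point of the open Lotka–Volterra system with X* > 0, Y* > 0, and the Jacobian matrix J = [[1 − Y*, −X*], [Y*, X* − 1]] has an eigenvalue with positive real part. -/

import Mathlib

/-- Regular hunting of preys (`−1 < bx < 0`, `by = 0`) destabilizes the
Lotka–Volterra system: `(1, 1 + bx)` is a positive stationary point and the
Jacobian there has an eigenvalue with positive real part. -/
theorem lv_hunting_preys_destabilizes
    (bx by_ : ℝ) (hbx₁ : -1 < bx) (hbx₂ : bx < 0) (hby : by_ = 0) :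
    let Xs : ℝ := 1
    let Ys : ℝ := 1 + bx
    (0 < Xs ∧ 0 < Ys ∧ Xs - Xs * Ys + bx = 0 ∧ Xs * Ys - Ys + by_ = 0) ∧
    ∃ μ ∈ spectrum ℂ ((!![1 - Ys, -Xs; Ys, Xs - 1]).map Complex.ofReal),
      0 < μ.re := by
  intro Xs Ys
  refine ⟨⟨one_pos, by simp [Ys]; linarith, by simp only [Xs, Ys]; ring, by rw [hby]; ring⟩, ?_⟩
  -- complex square root of the discriminant, with nonneg real part
  obtain ⟨s₀, hs₀⟩ := IsAlgClosed.exists_pow_nat_eq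
    ((bx ^ 2 - 4 * (1 + bx) : ℝ) : ℂ) (n := 2) (by norm_num)
  obtain ⟨s, hs, hsre⟩ : ∃ s : ℂ, s ^ 2 = ((bx ^ 2 - 4 * (1 + bx) : ℝ) : ℂ) ∧ 0 ≤ s.re := by
    rcases le_total 0 s₀.re with h | h
    · exact ⟨s₀, hs₀, h⟩
    · exact ⟨-s₀, by rw [neg_pow]; simpa using hs₀, by simpa using h⟩
  set μ : ℂ := ((-bx : ℝ) + s) / 2 with hμ
  refine ⟨μ, ?_, ?_⟩
  · rw [spectrum.mem_iff]
    intro h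
    rw [Matrix.isUnit_iff_isUnit_det, isUnit_iff_ne_zero] at h
    apply h
    have : (algebraMap ℂ (Matrix (Fin 2) (Fin 2) ℂ) μ
        - (!![1 - Ys, -Xs; Ys, Xs - 1]).map Complex.ofReal)
        = !![μ - ((1 : ℝ) - Ys : ℝ), ((1 : ℝ) : ℂ); -((Ys : ℝ) : ℂ), μ - ((Xs - 1 : ℝ) : ℂ)] := by
      ext i j
      fin_cases i <;> fin_cases j <;>
        simp [Matrix.algebraMap_matrix_apply, Xs, Ys]
    rw [this, Matrix.det_fin_two_of]
    have hY : ((Ys : ℝ) : ℂ) = 1 + (bx : ℂ) := by simp [Ys]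
    have hX : ((Xs - 1 : ℝ) : ℂ) = 0 := by simp [Xs]
    have h1 : ((1 - Ys : ℝ) : ℂ) = -(bx : ℂ) := by simp [Ys]
    push_cast [Ys, Xs]
    have hs' : s ^ 2 = (bx : ℂ) ^ 2 - 4 * (1 + (bx : ℂ)) := by push_cast at hs; exact hs
    rw [hμ]
    push_cast
    linear_combination (1/4 : ℂ) * hs'
  · have : μ.re = (-bx + s.re) / 2 := by
      simp [hμ, Complex.div_re]
    rw [this]
    have : (0:ℝ) < -bx := by linarith
    positivity
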